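/- Let p be a prime and let σ_k = Σ_{j=0}^{k} p^j. For every integer k ≥ 0, λ_p(σ_k) = p^k. -/

import Mathlib

/-- The row space of a matrix over `ZMod p`: all linear combinations of its rows. -/
def rowSpace {p m n : ℕ} (M : Matrix (Fin m) (Fin n) (ZMod p)) :
    Submodule (ZMod p) (Fin n → ZMod p) :=
  Submodule.span (ZMod p) {v | ∃ i, v = M i}

/-- The capacity of a matrix: the maximal Hamming weight of a vector in its row space. -/
noncomputable def capacity {p m n : ℕ} (M : Matrix (Fin m) (Fin n) (ZMod p)) : ℕ :=
  sSup (hammingNorm '' (rowSpace M : Set (Fin n → ZMod p)))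

/-- `lambdaP p n` is the minimum capacity over all matrices over `𝔽_p`
with `n` columns, none of which is a zero column.  (For `n = 0` this gives `0`.) -/
noncomputable def lambdaP (p n : ℕ) : ℕ :=
  sInf {c | ∃ (m : ℕ) (M : Matrix (Fin m) (Fin n) (ZMod p)),
    (∀ j, ∃ i, M i j ≠ 0) ∧ c = capacity M}

/-- `sigmaP p k = 1 + p + ⋯ + p^k`. -/
def sigmaP (p k : ℕ) : ℕ := ∑ j ∈ Finset.range (k + 1), p ^ j


open Finset

/-- A vector is normalized if its first nonzero coordinate is `1`. -/
def IsNormalized {p n : ℕ} (v : Fin n → ZMod p) : Prop :=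
  ∃ i, v i = 1 ∧ ∀ j, j < i → v j = 0

instance {p n : ℕ} : DecidablePred (@IsNormalized p n) := fun v => by
  unfold IsNormalized; infer_instance

/-- Index of the first nonzero coordinate. -/
def lead {p n : ℕ} (v : Fin (n + 1) → ZMod p) : Fin (n + 1) :=
  if h : ∃ i, v i ≠ 0 then
    (Finset.univ.filter fun i => v i ≠ 0).min' ⟨h.choose, by simp [h.choose_spec]⟩
  else 0

lemma lead_spec {p n : ℕ} {v : Fin (n + 1) → ZMod p} (h : ∃ i, v i ≠ 0) :
    v (lead v) ≠ 0 ∧ ∀ j, j < lead v → v j = 0 := by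
  rw [lead, dif_pos h]
  constructor
  · have := Finset.min'_mem (Finset.univ.filter fun i => v i ≠ 0)
      ⟨h.choose, by simp [h.choose_spec]⟩
    simpa using this
  · intro j hj
    by_contra hvj
    have : (Finset.univ.filter fun i => v i ≠ 0).min' _ ≤ j :=
      Finset.min'_le _ _ (by simpa using hvj)
    omega

lemma lead_unique {p n : ℕ} {v : Fin (n + 1) → ZMod p} {i : Fin (n + 1)}
    (h1 : v i ≠ 0) (h2 : ∀ j, j < i → v j = 0) : lead v = i := by
  have hex : ∃ i, v i ≠ 0 := ⟨i, h1⟩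
  obtain ⟨ha, hb⟩ := lead_spec hex
  rcases lt_trichotomy (lead v) i with h | h | h
  · exact absurd (h2 _ h) ha
  · exact h
  · exact absurd (hb _ h) h1
open Finset

lemma aux_count {p : ℕ} [hpF : Fact p.Prime] {m : ℕ} (b : Fin m → ZMod p) (i₀ : Fin m)
    (hb : b i₀ ≠ 0) :
    p * (Finset.univ.filter fun w : Fin m → ZMod p => ∑ i, w i * b i ≠ 0).card + p ^ m
      = p ^ (m + 1) := by
  classical
  set φ : (Fin m → ZMod p) → ZMod p := fun w => ∑ i, w i * b i with hφ
  have hcardfun : Fintype.card (Fin m → ZMod p) = p ^ m := by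
    simp [ZMod.card]
  have hfib : ∀ t : ZMod p,
      (Finset.univ.filter fun w => φ w = t).card
        = (Finset.univ.filter fun w => φ w = 0).card := by
    intro t
    set wt : Fin m → ZMod p := fun i => if i = i₀ then t * (b i₀)⁻¹ else 0 with hwt
    have hφwt : φ wt = t := by
      show ∑ i, wt i * b i = t
      rw [Finset.sum_eq_single i₀]
      · simp [hwt, mul_assoc, inv_mul_cancel₀ hb]
      · intro i _ hi; simp [hwt, hi]
      · simp
    have hadd : ∀ w : Fin m → ZMod p, φ (w + wt) = φ w + t := by
      intro w
      show ∑ i, (w + wt) i * b i = (∑ i, w i * b i) + t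
      rw [← hφwt]
      show ∑ i, (w + wt) i * b i = (∑ i, w i * b i) + ∑ i, wt i * b i
      simp only [Pi.add_apply, add_mul, Finset.sum_add_distrib]
    have hsub : ∀ w : Fin m → ZMod p, φ (w - wt) = φ w - t := by
      intro w
      have h1 : φ ((w - wt) + wt) = φ (w - wt) + t := hadd _
      rw [sub_add_cancel] at h1
      exact (eq_sub_of_add_eq h1.symm)
    refine Finset.card_bij' (fun w _ => w - wt) (fun w _ => w + wt) ?_ ?_ ?_ ?_
    · intro w hw
      simp only [Finset.mem_filter, Finset.mem_univ, true_and] at hw ⊢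
      rw [hsub, hw, sub_self]
    · intro w hw
      simp only [Finset.mem_filter, Finset.mem_univ, true_and] at hw ⊢
      rw [hadd, hw, zero_add]
    · intro w _; simp
    · intro w _; simp
  have htot : ∑ t : ZMod p, (Finset.univ.filter fun w => φ w = t).card = p ^ m := by
    rw [← Finset.card_eq_sum_card_fiberwise (fun w _ => Finset.mem_univ (φ w))]
    rw [Finset.card_univ, hcardfun]
  have hK : p * (Finset.univ.filter fun w => φ w = 0).card = p ^ m := by
    calc p * (Finset.univ.filter fun w => φ w = 0).card
        = ∑ _t : ZMod p, (Finset.univ.filter fun w => φ w = 0).card := by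
          rw [Finset.sum_const, Finset.card_univ, ZMod.card, smul_eq_mul]
      _ = ∑ t : ZMod p, (Finset.univ.filter fun w => φ w = t).card :=
          (Finset.sum_congr rfl fun t _ => (hfib t).symm)
      _ = p ^ m := htot
  have hsplit : (Finset.univ.filter fun w => φ w = 0).card
      + (Finset.univ.filter fun w => φ w ≠ 0).card = p ^ m := by
    have := Finset.card_filter_add_card_filter_not
      (s := (Finset.univ : Finset (Fin m → ZMod p))) (fun w => φ w = 0)
    rw [Finset.card_univ, hcardfun] at this
    exact this
  have key : p * ((Finset.univ.filter fun w => φ w = 0).card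
      + (Finset.univ.filter fun w => φ w ≠ 0).card) = p * p ^ m := by rw [hsplit]
  rw [mul_add, hK] at key
  rw [pow_succ]
  linarith [key]

lemma aux_scale {p : ℕ} [hpF : Fact p.Prime] {n : ℕ} (Q : (Fin (n + 1) → ZMod p) → Prop)
    [DecidablePred Q] (hQ0 : ¬ Q 0) (hQs : ∀ c : ZMod p, c ≠ 0 → ∀ v, Q (c • v) ↔ Q v) :
    (Finset.univ.filter Q).card
      = (p - 1) * (Finset.univ.filter fun v => IsNormalized v ∧ Q v).card := by
  classical
  have hbij : (Finset.univ.filter Q).card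
      = (((Finset.univ : Finset (ZMod p)).filter fun c => c ≠ 0) ×ˢ
          (Finset.univ.filter fun v => IsNormalized v ∧ Q v)).card := by
    refine Finset.card_bij' (fun v _ => (v (lead v), (v (lead v))⁻¹ • v))
      (fun cs _ => cs.1 • cs.2) ?_ ?_ ?_ ?_
    · intro v hv
      simp only [Finset.mem_filter, Finset.mem_univ, true_and] at hv
      have hvne : ∃ i, v i ≠ 0 := by
        by_contra h
        push_neg at h
        apply hQ0
        have : v = 0 := funext fun i => h i
        rwa [this] at hv
      obtain ⟨hl1, hl2⟩ := lead_spec hvne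
      simp only [Finset.mem_product, Finset.mem_filter, Finset.mem_univ, true_and]
      refine ⟨hl1, ⟨lead v, ?_, ?_⟩, ?_⟩
      · simp [inv_mul_cancel₀ hl1]
      · intro j hj; simp [hl2 j hj]
      · exact (hQs _ (inv_ne_zero hl1) v).mpr hv
    · intro cs hcs
      simp only [Finset.mem_product, Finset.mem_filter, Finset.mem_univ, true_and] at hcs
      simp only [Finset.mem_filter, Finset.mem_univ, true_and]
      exact (hQs cs.1 hcs.1 cs.2).mpr hcs.2.2
    · intro v hv
      simp only [Finset.mem_filter, Finset.mem_univ, true_and] at hv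
      have hvne : ∃ i, v i ≠ 0 := by
        by_contra h
        push_neg at h
        apply hQ0
        have : v = 0 := funext fun i => h i
        rwa [this] at hv
      obtain ⟨hl1, _⟩ := lead_spec hvne
      simp [smul_smul, mul_inv_cancel₀ hl1]
    · intro cs hcs
      simp only [Finset.mem_product, Finset.mem_filter, Finset.mem_univ, true_and] at hcs
      obtain ⟨hc, ⟨i, hi1, hi2⟩, _⟩ := hcs
      have hlead : lead (cs.1 • cs.2) = i := by
        apply lead_unique
        · simp [hi1, hc]
        · intro j hj; simp [hi2 j hj]
      have hval : (cs.1 • cs.2) i = cs.1 := by simp [hi1]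
      show ((cs.1 • cs.2) (lead (cs.1 • cs.2)), ((cs.1 • cs.2) (lead (cs.1 • cs.2)))⁻¹ • (cs.1 • cs.2)) = cs
      rw [hlead, hval, smul_smul, inv_mul_cancel₀ hc, one_smul]
  rw [hbij, Finset.card_product]
  congr 1
  rw [Finset.filter_ne', Finset.card_erase_of_mem (Finset.mem_univ 0), Finset.card_univ,
    ZMod.card]

lemma geom_aux {p : ℕ} (hp : 1 ≤ p) (k : ℕ) : (p - 1) * sigmaP p k + 1 = p ^ (k + 1) := by
  obtain ⟨q, rfl⟩ : ∃ q, p = q + 1 := ⟨p - 1, by omega⟩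
  simp only [Nat.add_sub_cancel]
  induction k with
  | zero => simp [sigmaP]
  | succ k ih =>
    have h1 : sigmaP (q + 1) (k + 1) = sigmaP (q + 1) k + (q + 1) ^ (k + 1) :=
      Finset.sum_range_succ _ _
    have h2 : (q + 1) ^ (k + 1 + 1) = (q + 1) * (q + 1) ^ (k + 1) := by ring
    rw [h1, h2, ← ih]
    ring

lemma card_norm {p : ℕ} [hpF : Fact p.Prime] (k : ℕ) :
    (Finset.univ.filter fun v : Fin (k + 1) → ZMod p => IsNormalized v).card
      = sigmaP p k := by
  classical
  have hp := hpF.out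
  have h1 := aux_scale (p := p) (n := k) (fun v => v ≠ 0) (by simp)
    (fun c hc v => by
      constructor
      · intro h hv; rw [hv, smul_zero] at h; exact h rfl
      · intro h hcv
        apply h
        have := congrArg (fun w => c⁻¹ • w) hcv
        simpa [smul_smul, inv_mul_cancel₀ hc] using this)
  have h2 : (Finset.univ.filter fun v : Fin (k + 1) → ZMod p => IsNormalized v ∧ v ≠ 0)
      = Finset.univ.filter fun v => IsNormalized v := by
    apply Finset.filter_congr
    intro v _
    constructor
    · exact fun h => h.1
    · intro h
      refine ⟨h, ?_⟩
      obtain ⟨i, hi1, _⟩ := h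
      intro h0
      rw [h0] at hi1
      simp only [Pi.zero_apply] at hi1
      exact one_ne_zero hi1.symm
  rw [h2] at h1
  have h3 : (Finset.univ.filter fun v : Fin (k + 1) → ZMod p => v ≠ 0).card + 1
      = p ^ (k + 1) := by
    have hsplit := Finset.card_filter_add_card_filter_not
      (s := (Finset.univ : Finset (Fin (k + 1) → ZMod p))) (fun v => v ≠ 0)
    have hzero : (Finset.univ.filter fun v : Fin (k + 1) → ZMod p => ¬ v ≠ 0)
        = {0} := by
      simp only [not_not]
      rw [Finset.filter_eq']
      simp
    rw [hzero] at hsplit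
    simpa [ZMod.card] using hsplit
  have hgeom := geom_aux (Nat.one_le_iff_ne_zero.mpr hp.pos.ne') k
  have : (p - 1) * (Finset.univ.filter fun v : Fin (k + 1) → ZMod p => IsNormalized v).card
      = (p - 1) * sigmaP p k := by omega
  exact Nat.eq_of_mul_eq_mul_left (by have := hp.two_le; omega) this

lemma card_norm_pair {p : ℕ} [hpF : Fact p.Prime] (k : ℕ) {a : Fin (k + 1) → ZMod p}
    (ha : a ≠ 0) :
    (Finset.univ.filter fun v : Fin (k + 1) → ZMod p =>
        IsNormalized v ∧ ∑ i, a i * v i ≠ 0).card = p ^ k := by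
  classical
  have hp := hpF.out
  have hsmul : ∀ (c : ZMod p) (v : Fin (k + 1) → ZMod p),
      ∑ i, a i * (c • v) i = c * ∑ i, a i * v i := by
    intro c v
    rw [Finset.mul_sum]
    exact Finset.sum_congr rfl fun i _ => by simp [mul_left_comm]
  have h1 := aux_scale (p := p) (n := k) (fun v => ∑ i, a i * v i ≠ 0)
    (by simp)
    (fun c hc v => by
      simp only [hsmul]
      constructor
      · intro h h0; exact h (by rw [h0, mul_zero])
      · intro h
        exact mul_ne_zero hc h)
  -- relate to aux_count
  obtain ⟨i₀, hi₀⟩ : ∃ i, a i ≠ 0 := Function.ne_iff.mp ha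
  have h2 := aux_count (p := p) a i₀ hi₀
  have hcomm : (Finset.univ.filter fun v : Fin (k + 1) → ZMod p => ∑ i, v i * a i ≠ 0)
      = Finset.univ.filter fun v => ∑ i, a i * v i ≠ 0 := by
    apply Finset.filter_congr
    intro v _
    rw [Finset.sum_congr rfl fun i _ => mul_comm (v i) (a i)]
  rw [hcomm, h1] at h2
  -- h2 : p * ((p-1) * X) + p^(k+1) = p^(k+2)
  have h3 : p * ((p - 1) * p ^ k) + p ^ (k + 1) = p ^ (k + 1 + 1) := by
    obtain ⟨q, rfl⟩ : ∃ q, p = q + 1 := ⟨p - 1, (Nat.succ_pred_eq_of_pos hp.pos).symm⟩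
    simp only [Nat.add_sub_cancel]
    ring
  have h5 : p * ((p - 1) * (Finset.univ.filter fun v : Fin (k + 1) → ZMod p =>
      IsNormalized v ∧ ∑ i, a i * v i ≠ 0).card) = p * ((p - 1) * p ^ k) :=
    Nat.add_right_cancel (h2.trans h3.symm)
  have h6 := Nat.eq_of_mul_eq_mul_left hp.pos h5
  exact Nat.eq_of_mul_eq_mul_left (Nat.sub_pos_of_lt hp.one_lt) h6

lemma rowSpace_eq_range {p m n : ℕ} (M : Matrix (Fin m) (Fin n) (ZMod p)) :
    rowSpace M = LinearMap.range M.vecMulLinear := by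
  rw [range_vecMulLinear]
  unfold rowSpace
  congr 1
  ext v
  exact ⟨fun ⟨i, h⟩ => ⟨i, h.symm⟩, fun ⟨i, h⟩ => ⟨i, h.symm⟩⟩

lemma lower_bound {p : ℕ} [hpF : Fact p.Prime] {k m : ℕ}
    (M : Matrix (Fin m) (Fin (sigmaP p k)) (ZMod p)) (hM : ∀ j, ∃ i, M i j ≠ 0) :
    p ^ k ≤ capacity M := by
  classical
  have hp := hpF.out
  by_contra hlt
  push_neg at hlt
  have hbdd : BddAbove (hammingNorm '' (rowSpace M : Set (Fin (sigmaP p k) → ZMod p))) := by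
    refine ⟨sigmaP p k, ?_⟩
    rintro x ⟨v, -, rfl⟩
    simpa using hammingNorm_le_card_fintype (x := v)
  have hall : ∀ a : Fin m → ZMod p, hammingNorm (Matrix.vecMul a M) + 1 ≤ p ^ k := by
    intro a
    have hmem : Matrix.vecMul a M ∈ rowSpace M := by
      rw [rowSpace_eq_range]
      exact ⟨a, rfl⟩
    have hle : hammingNorm (Matrix.vecMul a M) ≤ capacity M :=
      le_csSup hbdd ⟨_, hmem, rfl⟩
    omega
  have hcardfun : Fintype.card (Fin m → ZMod p) = p ^ m := by simp [ZMod.card]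
  have happ : ∀ (a : Fin m → ZMod p) (j : Fin (sigmaP p k)),
      Matrix.vecMul a M j = ∑ i, a i * M i j := by
    intro a j
    simp [Matrix.vecMul, dotProduct]
  have hswap : ∑ a : Fin m → ZMod p, hammingNorm (Matrix.vecMul a M)
      = ∑ j : Fin (sigmaP p k),
          (Finset.univ.filter fun a : Fin m → ZMod p => ∑ i, a i * M i j ≠ 0).card := by
    have h1 : ∀ a : Fin m → ZMod p, hammingNorm (Matrix.vecMul a M)
        = ∑ j : Fin (sigmaP p k), if (∑ i, a i * M i j) ≠ 0 then 1 else 0 := by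
      intro a
      rw [hammingNorm, Finset.card_filter]
      apply Finset.sum_congr rfl
      intro j _
      rw [happ a j]
    simp_rw [h1, Finset.card_filter]
    exact Finset.sum_comm
  set S := ∑ a : Fin m → ZMod p, hammingNorm (Matrix.vecMul a M) with hS
  have hsum : p * S + sigmaP p k * p ^ m = sigmaP p k * (p ^ m * p) := by
    rw [hswap, Finset.mul_sum]
    have hj : ∀ j : Fin (sigmaP p k), p * (Finset.univ.filter
        fun a : Fin m → ZMod p => ∑ i, a i * M i j ≠ 0).card + p ^ m = p ^ (m + 1) := by
      intro j
      obtain ⟨i, hi⟩ := hM j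
      exact aux_count (fun i => M i j) i hi
    calc (∑ j : Fin (sigmaP p k), p * (Finset.univ.filter
          fun a : Fin m → ZMod p => ∑ i, a i * M i j ≠ 0).card) + sigmaP p k * p ^ m
        = ∑ j : Fin (sigmaP p k), (p * (Finset.univ.filter
            fun a : Fin m → ZMod p => ∑ i, a i * M i j ≠ 0).card + p ^ m) := by
          rw [Finset.sum_add_distrib, Finset.sum_const, Finset.card_univ, Fintype.card_fin,
            smul_eq_mul]
      _ = ∑ _j : Fin (sigmaP p k), p ^ (m + 1) := Finset.sum_congr rfl fun j _ => hj j
      _ = sigmaP p k * (p ^ m * p) := by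
          rw [Finset.sum_const, Finset.card_univ, Fintype.card_fin, smul_eq_mul, pow_succ]
  have hsum2 : S + p ^ m ≤ p ^ m * p ^ k := by
    calc S + p ^ m = ∑ a : Fin m → ZMod p, (hammingNorm (Matrix.vecMul a M) + 1) := by
          rw [Finset.sum_add_distrib, Finset.sum_const, Finset.card_univ, hcardfun,
            smul_eq_mul, mul_one]
      _ ≤ ∑ _a : Fin m → ZMod p, p ^ k := Finset.sum_le_sum fun a _ => hall a
      _ = p ^ m * p ^ k := by
          rw [Finset.sum_const, Finset.card_univ, hcardfun, smul_eq_mul]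
  have hpn : p * sigmaP p k + 1 = p * p ^ k + sigmaP p k := by
    have h : (p - 1) * sigmaP p k + 1 = p ^ (k + 1) := geom_aux hp.one_le k
    have h2 : (p - 1) * sigmaP p k + sigmaP p k = p * sigmaP p k := by
      rw [← add_one_mul, Nat.sub_add_cancel hp.one_le]
    have h3 : p ^ (k + 1) = p * p ^ k := by rw [pow_succ, mul_comm]
    rw [h3] at h
    linarith [h, h2]
  -- derive contradiction
  set A := p ^ m with hA
  set P := p ^ k with hP
  have hA1 : 1 ≤ A := Nat.one_le_pow _ _ hp.pos
  have c1 : p * S + p * A ≤ p * (A * P) := by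
    have := Nat.mul_le_mul_left p hsum2
    rw [mul_add] at this
    exact this
  have c2 : (p * sigmaP p k + 1) * A = (p * P + sigmaP p k) * A := by rw [hpn]
  have c3 : 2 * A ≤ p * A := Nat.mul_le_mul_right A hp.two_le
  nlinarith [hsum, c1, c2, c3, hA1]

theorem statement11 (p : ℕ) (hp : p.Prime) (k : ℕ) :
    lambdaP p (sigmaP p k) = p ^ k := by
  haveI := Fact.mk hp
  classical
  have hcard : Fintype.card {v : Fin (k + 1) → ZMod p // IsNormalized v} = sigmaP p k := by
    rw [Fintype.card_subtype]
    exact card_norm k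
  let e : Fin (sigmaP p k) ≃ {v : Fin (k + 1) → ZMod p // IsNormalized v} :=
    (Fintype.equivFinOfCardEq hcard).symm
  let M : Matrix (Fin (k + 1)) (Fin (sigmaP p k)) (ZMod p) := fun i j => (e j).1 i
  have hcols : ∀ j, ∃ i, M i j ≠ 0 := by
    intro j
    obtain ⟨i, hi1, _⟩ := (e j).2
    exact ⟨i, by simp [M, hi1]⟩
  have hub : capacity M ≤ p ^ k := by
    apply csSup_le
    · exact ⟨hammingNorm (0 : Fin (sigmaP p k) → ZMod p), 0, Submodule.zero_mem _, rfl⟩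
    rintro x ⟨v, hv, rfl⟩
    rw [SetLike.mem_coe, rowSpace_eq_range] at hv
    obtain ⟨a, rfl⟩ := hv
    by_cases ha : a = 0
    · subst ha
      rw [map_zero, hammingNorm_zero]
      exact Nat.zero_le _
    · rw [← card_norm_pair k ha, Matrix.vecMulLinear_apply]
      have hnorm : hammingNorm (Matrix.vecMul a M)
          = (Finset.univ.filter fun j => Matrix.vecMul a M j ≠ 0).card := rfl
      rw [hnorm]
      apply Finset.card_le_card_of_injOn (fun j => (e j).1)
      · intro j hj
        simp only [Finset.mem_coe, Finset.mem_filter, Finset.mem_univ, true_and] at hj ⊢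
        refine ⟨(e j).2, ?_⟩
        have happ : Matrix.vecMul a M j = ∑ i, a i * (e j).1 i := by
          simp [Matrix.vecMul, dotProduct, M]
        rwa [happ] at hj
      · intro j1 _ j2 _ hj
        exact e.injective (Subtype.ext hj)
  have hmem : capacity M ∈ {c | ∃ (m : ℕ) (N : Matrix (Fin m) (Fin (sigmaP p k)) (ZMod p)),
      (∀ j, ∃ i, N i j ≠ 0) ∧ c = capacity N} := ⟨k + 1, M, hcols, rfl⟩
  unfold lambdaP
  apply le_antisymm
  · exact le_trans (Nat.sInf_le hmem) hub
  · refine le_csInf ⟨_, hmem⟩ ?_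
    rintro c ⟨m, N, hN, rfl⟩
    exact lower_bound N hN
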